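/- Let X be a set and let 𝒜, ℬ be collections of subsets of X with ℬ Γ-like. Then Player I has a winning (perfect-information) strategy in G_{<2}(𝒜,ℬ) if and only if Player I has a winning (perfect-information) strategy in G_fin(𝒜,ℬ). -/

import Mathlib

open Set

/-- A collection `𝒜` of subsets of `X` is Γ-like if every member is infinite
and every infinite subset of a member is itself a member. -/
def GammaLike {X : Type*} (𝒜 : Set (Set X)) : Prop :=
  ∀ A ∈ 𝒜, A.Infinite ∧ ∀ A' ⊆ A, A'.Infinite → A' ∈ 𝒜

/-- A collection `𝒜` is almost-Γ-like if each `A ∈ 𝒜` has a countably infinite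
subset `A'` all of whose cofinite subsets belong to `𝒜`. -/
def AlmostGammaLike {X : Type*} (𝒜 : Set (Set X)) : Prop :=
  ∀ A ∈ 𝒜, ∃ A' ⊆ A, A'.Countable ∧ A'.Infinite ∧
    ∀ A'' ⊆ A', (A' \ A'').Finite → A'' ∈ 𝒜

/-- `𝒜` is closed under finite unions. -/
def UnionClosed {X : Type*} (𝒜 : Set (Set X)) : Prop :=
  ∀ A ∈ 𝒜, ∀ B ∈ 𝒜, A ∪ B ∈ 𝒜

/-- α₁(𝒜,ℬ): for every sequence from 𝒜 there is `B ∈ ℬ` with `A n \ B` finite for all `n`. -/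
def Alpha1 {X : Type*} (𝒜 ℬ : Set (Set X)) : Prop :=
  ∀ A : ℕ → Set X, (∀ n, A n ∈ 𝒜) → ∃ B ∈ ℬ, ∀ n, (A n \ B).Finite

/-- α₂(𝒜,ℬ): for every sequence from 𝒜 there is `B ∈ ℬ` meeting each `A n` infinitely. -/
def Alpha2 {X : Type*} (𝒜 ℬ : Set (Set X)) : Prop :=
  ∀ A : ℕ → Set X, (∀ n, A n ∈ 𝒜) → ∃ B ∈ ℬ, ∀ n, (A n ∩ B).Infinite

/-- α₂'(𝒜,ℬ): for every sequence from 𝒜 there is `B ∈ ℬ` meeting each `A n`. -/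
def Alpha2' {X : Type*} (𝒜 ℬ : Set (Set X)) : Prop :=
  ∀ A : ℕ → Set X, (∀ n, A n ∈ 𝒜) → ∃ B ∈ ℬ, ∀ n, (A n ∩ B).Nonempty

/-- α₃(𝒜,ℬ): for every sequence from 𝒜 there is `B ∈ ℬ` meeting infinitely many `A n` infinitely. -/
def Alpha3 {X : Type*} (𝒜 ℬ : Set (Set X)) : Prop :=
  ∀ A : ℕ → Set X, (∀ n, A n ∈ 𝒜) → ∃ B ∈ ℬ, {n | (A n ∩ B).Infinite}.Infinite

/-- α₄(𝒜,ℬ): for every sequence from 𝒜 there is `B ∈ ℬ` meeting infinitely many `A n`. -/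
def Alpha4 {X : Type*} (𝒜 ℬ : Set (Set X)) : Prop :=
  ∀ A : ℕ → Set X, (∀ n, A n ∈ 𝒜) → ∃ B ∈ ℬ, {n | (A n ∩ B).Nonempty}.Infinite

/-- α_{1.1}(𝒜,ℬ): α₁ restricted to pairwise disjoint sequences. -/
def Alpha1p1 {X : Type*} (𝒜 ℬ : Set (Set X)) : Prop :=
  ∀ A : ℕ → Set X, (∀ n, A n ∈ 𝒜) → (∀ m n, m ≠ n → Disjoint (A m) (A n)) →
    ∃ B ∈ ℬ, ∀ n, (A n \ B).Finite

/-- α_{1.5}(𝒜,ℬ): for pairwise disjoint sequences from 𝒜 there is `B ∈ ℬ` with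
`A n \ B` finite for infinitely many `n`. -/
def Alpha1p5 {X : Type*} (𝒜 ℬ : Set (Set X)) : Prop :=
  ∀ A : ℕ → Set X, (∀ n, A n ∈ 𝒜) → (∀ m n, m ≠ n → Disjoint (A m) (A n)) →
    ∃ B ∈ ℬ, {n | (A n \ B).Finite}.Infinite

/-- α_{2.1}(𝒜,ℬ): α₂ restricted to pairwise disjoint sequences. -/
def Alpha2p1 {X : Type*} (𝒜 ℬ : Set (Set X)) : Prop :=
  ∀ A : ℕ → Set X, (∀ n, A n ∈ 𝒜) → (∀ m n, m ≠ n → Disjoint (A m) (A n)) →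
    ∃ B ∈ ℬ, ∀ n, (A n ∩ B).Infinite

/-- α_{3.1}(𝒜,ℬ): α₃ restricted to pairwise disjoint sequences. -/
def Alpha3p1 {X : Type*} (𝒜 ℬ : Set (Set X)) : Prop :=
  ∀ A : ℕ → Set X, (∀ n, A n ∈ 𝒜) → (∀ m n, m ≠ n → Disjoint (A m) (A n)) →
    ∃ B ∈ ℬ, {n | (A n ∩ B).Infinite}.Infinite

/-- α_{4.1}(𝒜,ℬ): α₄ restricted to pairwise disjoint sequences. -/
def Alpha4p1 {X : Type*} (𝒜 ℬ : Set (Set X)) : Prop :=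
  ∀ A : ℕ → Set X, (∀ n, A n ∈ 𝒜) → (∀ m n, m ≠ n → Disjoint (A m) (A n)) →
    ∃ B ∈ ℬ, {n | (A n ∩ B).Nonempty}.Infinite

/-- Player I has a winning predetermined strategy in G₁(𝒜,ℬ). -/
def PredWinG1 {X : Type*} (𝒜 ℬ : Set (Set X)) : Prop :=
  ∃ A : ℕ → Set X, (∀ n, A n ∈ 𝒜) ∧
    ∀ a : ℕ → X, (∀ n, a n ∈ A n) → Set.range a ∉ ℬ

/-- Player I has a winning predetermined strategy in G_fin(𝒜,ℬ). -/
def PredWinGfin {X : Type*} (𝒜 ℬ : Set (Set X)) : Prop :=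
  ∃ A : ℕ → Set X, (∀ n, A n ∈ 𝒜) ∧
    ∀ F : ℕ → Set X, (∀ n, (F n).Finite ∧ F n ⊆ A n) → (⋃ n, F n) ∉ ℬ

/-- Player I has a winning predetermined strategy in G_{<2}(𝒜,ℬ),
where II picks at most one point each round. -/
def PredWinGlt2 {X : Type*} (𝒜 ℬ : Set (Set X)) : Prop :=
  ∃ A : ℕ → Set X, (∀ n, A n ∈ 𝒜) ∧
    ∀ F : ℕ → Set X, (∀ n, (F n).Subsingleton ∧ F n ⊆ A n) → (⋃ n, F n) ∉ ℬ

/-- Player I has a winning predetermined strategy in G_cf(𝒜,ℬ),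
where II picks a cofinite subset each round. -/
def PredWinGcf {X : Type*} (𝒜 ℬ : Set (Set X)) : Prop :=
  ∃ A : ℕ → Set X, (∀ n, A n ∈ 𝒜) ∧
    ∀ B : ℕ → Set X, (∀ n, B n ⊆ A n ∧ (A n \ B n).Finite) → (⋃ n, B n) ∉ ℬ

/-- Player I has a winning perfect-information strategy in G₁(𝒜,ℬ):
a function from finite sequences of points of X into 𝒜 defeating all counterplays. -/
def WinG1 {X : Type*} (𝒜 ℬ : Set (Set X)) : Prop :=
  ∃ σ : List X → Set X, (∀ s, σ s ∈ 𝒜) ∧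
    ∀ a : ℕ → X, (∀ n, a n ∈ σ (List.ofFn fun i : Fin n => a i)) → Set.range a ∉ ℬ

/-- Player I has a winning perfect-information strategy in G_fin(𝒜,ℬ):
a function from finite sequences of finite subsets of X into 𝒜 defeating all counterplays. -/
def WinGfin {X : Type*} (𝒜 ℬ : Set (Set X)) : Prop :=
  ∃ σ : List (Set X) → Set X, (∀ s : List (Set X), (∀ F ∈ s, F.Finite) → σ s ∈ 𝒜) ∧
    ∀ F : ℕ → Set X,
      (∀ n, (F n).Finite ∧ F n ⊆ σ (List.ofFn fun i : Fin n => F i)) →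
      (⋃ n, F n) ∉ ℬ

/-- Player I has a winning perfect-information strategy in G_{<2}(𝒜,ℬ):
a function from finite sequences of at-most-singleton subsets of X into 𝒜
defeating all counterplays. -/
def WinGlt2 {X : Type*} (𝒜 ℬ : Set (Set X)) : Prop :=
  ∃ σ : List (Set X) → Set X, (∀ s : List (Set X), (∀ F ∈ s, F.Subsingleton) → σ s ∈ 𝒜) ∧
    ∀ F : ℕ → Set X,
      (∀ n, (F n).Subsingleton ∧ F n ⊆ σ (List.ofFn fun i : Fin n => F i)) →
      (⋃ n, F n) ∉ ℬ


section Stmt5Aux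

variable {X : Type*}

open Classical in
noncomputable def stmt5pick (F U : Set X) : Set X :=
  if h : (F \ U).Nonempty then {h.choose} else ∅

lemma stmt5pick_subsingleton (F U : Set X) : (stmt5pick F U).Subsingleton := by
  unfold stmt5pick; split
  · exact Set.subsingleton_singleton
  · exact Set.subsingleton_empty

lemma stmt5pick_subset (F U : Set X) : stmt5pick F U ⊆ F := by
  unfold stmt5pick; split
  · next h =>
      intro x hx
      rw [Set.mem_singleton_iff] at hx; subst hx
      exact h.choose_spec.1
  · simp

lemma stmt5pick_not_mem (F U : Set X) : ∀ x ∈ stmt5pick F U, x ∉ U := by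
  unfold stmt5pick; split
  · next h =>
      intro x hx
      rw [Set.mem_singleton_iff] at hx; subst hx
      exact h.choose_spec.2
  · simp

lemma stmt5pick_eq_empty {F U : Set X} (h : stmt5pick F U = ∅) : F ⊆ U := by
  unfold stmt5pick at h
  split at h
  · next h' => simp at h
  · next h' =>
      intro x hx
      by_contra hxU
      exact h' ⟨x, hx, hxU⟩

def stmt5U (t : List (Set X)) : Set X := ⋃ G ∈ t, G

lemma stmt5U_reverse (t : List (Set X)) : stmt5U t.reverse = stmt5U t := by
  unfold stmt5U; ext x; simp

noncomputable def stmt5simRev (σ : List (Set X) → Set X) : List (Set X) → List (Set X)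
  | [] => []
  | F :: s => stmt5pick F (stmt5U (stmt5simRev σ s)) :: stmt5simRev σ s

noncomputable def stmt5sim (σ : List (Set X) → Set X) (s : List (Set X)) : List (Set X) :=
  (stmt5simRev σ s.reverse).reverse

lemma stmt5sim_nil (σ : List (Set X) → Set X) : stmt5sim σ [] = [] := by
  simp [stmt5sim, stmt5simRev]

lemma stmt5sim_append (σ : List (Set X) → Set X) (s : List (Set X)) (F : Set X) :
    stmt5sim σ (s ++ [F]) = stmt5sim σ s ++ [stmt5pick F (stmt5U (stmt5sim σ s))] := by
  unfold stmt5sim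
  simp only [List.reverse_append, List.reverse_singleton, List.singleton_append,
    stmt5simRev, List.reverse_cons, stmt5U_reverse, List.nil_append]
  simp [stmt5simRev]

lemma stmt5simRev_subsingleton (σ : List (Set X) → Set X) (t : List (Set X)) :
    ∀ G ∈ stmt5simRev σ t, G.Subsingleton := by
  induction t with
  | nil => simp [stmt5simRev]
  | cons F t ih =>
      intro G hG
      simp only [stmt5simRev, List.mem_cons] at hG
      rcases hG with h | h
      · subst h; exact stmt5pick_subsingleton _ _
      · exact ih G h

lemma stmt5sim_subsingleton (σ : List (Set X) → Set X) (s : List (Set X)) :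
    ∀ G ∈ stmt5sim σ s, G.Subsingleton := by
  intro G hG
  rw [stmt5sim, List.mem_reverse] at hG
  exact stmt5simRev_subsingleton σ s.reverse G hG

end Stmt5Aux

/-- If ℬ is Γ-like, Player I has a winning perfect-information strategy in G_{<2}(𝒜,ℬ)
iff Player I has a winning perfect-information strategy in G_fin(𝒜,ℬ). -/
theorem stmt5 {X : Type*} (𝒜 ℬ : Set (Set X))
    (hB : GammaLike ℬ) :
    WinGlt2 𝒜 ℬ ↔ WinGfin 𝒜 ℬ := by
  constructor
  · rintro ⟨σ, hσA, hσw⟩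
    refine ⟨fun s => σ (stmt5sim σ s), ?_, ?_⟩
    · intro s _hs
      exact hσA _ (stmt5sim_subsingleton σ s)
    · intro F hF hUB
      set G : ℕ → Set X := fun n =>
        stmt5pick (F n) (stmt5U (stmt5sim σ (List.ofFn fun i : Fin n => F i))) with hGdef
      have hsim : ∀ n, stmt5sim σ (List.ofFn fun i : Fin n => F i)
          = List.ofFn fun i : Fin n => G i := by
        intro n
        induction n with
        | zero => simp [stmt5sim_nil]
        | succ n ih =>
            have h1 : (List.ofFn fun i : Fin (n+1) => F i)
                = (List.ofFn fun i : Fin n => F i) ++ [F n] := by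
              rw [List.ofFn_succ']
              simp [List.concat_eq_append]
            have h2 : (List.ofFn fun i : Fin (n+1) => G i)
                = (List.ofFn fun i : Fin n => G i) ++ [G n] := by
              rw [List.ofFn_succ']
              simp [List.concat_eq_append]
            rw [h1, h2, stmt5sim_append, ih]
            rw [← ih]
      -- the simulated play is a legal play against σ
      have hGplay : ∀ n, (G n).Subsingleton ∧ G n ⊆ σ (List.ofFn fun i : Fin n => G i) := by
        intro n
        refine ⟨stmt5pick_subsingleton _ _, ?_⟩
        rw [← hsim n]
        exact (stmt5pick_subset _ _).trans (hF n).2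
      have hGnotB : (⋃ n, G n) ∉ ℬ := hσw G hGplay
      have hGsubF : ∀ n, G n ⊆ F n := fun n => stmt5pick_subset _ _
      -- the key union identity
      have hUn : ∀ n, stmt5U (stmt5sim σ (List.ofFn fun i : Fin n => F i))
          = ⋃ i : Fin n, G i := by
        intro n
        rw [hsim n]
        unfold stmt5U
        ext x
        simp [List.mem_ofFn]
      obtain ⟨hInf, hClosed⟩ := hB _ hUB
      -- claim: ⋃ G is infinite
      have hGinf : (⋃ n, G n).Infinite := by
        by_contra hfin
        rw [Set.not_infinite] at hfin
        -- each nonempty G n contributes a fresh point, so only finitely many are nonempty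
        set N : Set ℕ := {n | (G n).Nonempty} with hN
        have hNfin : N.Finite := by
          rw [← Set.not_infinite]
          intro hNinf
          have : (⋃ n, G n).Infinite := by
            have key : ∀ m n : ℕ, m ∈ N → n ∈ N → m < n →
                ∀ x ∈ G m, ∀ y ∈ G n, x ≠ y := by
              intro m n hm hn hmn x hx y hy hxy
              subst hxy
              have : x ∉ stmt5U (stmt5sim σ (List.ofFn fun i : Fin n => F i)) :=
                stmt5pick_not_mem _ _ x hy
              rw [hUn n] at this
              exact this (Set.mem_iUnion.mpr ⟨⟨m, hmn⟩, hx⟩)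
            -- build an injection from N into ⋃ G
            have hmap : ∀ n : N, ∃ x, x ∈ G (n : ℕ) := fun n => n.2
            choose p hp using hmap
            have hpinj : Function.Injective p := by
              intro a b hab
              by_contra hne
              have hne' : (a : ℕ) ≠ (b : ℕ) := fun h => hne (Subtype.ext h)
              rcases hne'.lt_or_gt with h | h
              · exact key a b a.2 b.2 h (p a) (hp a) (p b) (hp b) hab
              · exact key b a b.2 a.2 h (p b) (hp b) (p a) (hp a) hab.symm
            have : Infinite N := hNinf.to_subtype
            exact Set.infinite_of_injective_forall_mem hpinj
              (fun n : N => Set.mem_iUnion.mpr ⟨(n : ℕ), hp n⟩)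
          exact this hfin
        obtain ⟨N₀, hN₀⟩ := hNfin.bddAbove
        -- for n > N₀, G n = ∅, hence F n ⊆ ⋃ G
        have hFn : ∀ n, N₀ < n → F n ⊆ ⋃ m, G m := by
          intro n hn
          have hGn : G n = ∅ := by
            by_contra h
            exact absurd (hN₀ (Set.nonempty_iff_ne_empty.mpr h)) (not_le.mpr hn)
          have : F n ⊆ stmt5U (stmt5sim σ (List.ofFn fun i : Fin n => F i)) :=
            stmt5pick_eq_empty hGn
          rw [hUn n] at this
          exact this.trans (Set.iUnion_subset fun i => Set.subset_iUnion G (i : ℕ))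
        -- so ⋃ F is finite, contradiction
        have : (⋃ n, F n) ⊆ (⋃ i : Fin (N₀ + 1), F i) ∪ ⋃ m, G m := by
          intro x hx
          rcases Set.mem_iUnion.mp hx with ⟨n, hn⟩
          rcases le_or_gt n N₀ with h | h
          · exact Or.inl (Set.mem_iUnion.mpr ⟨⟨n, Nat.lt_succ_of_le h⟩, hn⟩)
          · exact Or.inr (hFn n h hn)
        have hfin2 : ((⋃ i : Fin (N₀ + 1), F i) ∪ ⋃ m, G m).Finite :=
          (Set.finite_iUnion fun i : Fin (N₀ + 1) => (hF (i : ℕ)).1).union hfin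
        exact hInf (hfin2.subset this)
      exact hGnotB (hClosed _ (Set.iUnion_mono hGsubF) hGinf)
  · rintro ⟨σ, hσA, hσw⟩
    refine ⟨σ, ?_, ?_⟩
    · intro s hs
      exact hσA s fun F hFs => (hs F hFs).finite
    · intro F hF
      exact hσw F fun n => ⟨(hF n).1.finite, (hF n).2⟩
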